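/- Given Y(a,b) := e^{aλA} e^{bλB} e^{-aλA} · e^{-aλA} e^{-bλB} e^{aλA}, the product Y(a,b)·Y(a,-b) can be written as exp of an element whose degree-1-in-B part vanishes: the terms linear in b cancel, leaving leading term 2ab²λ³[B,[A,B]] plus corrections of order λ⁵ (in a free nilpotent Lie algebra truncated at degree 4). -/

import Mathlib

open NormedSpace

section Aux
variable {n : ℕ}

private lemma exp_nilfive (M : Matrix (Fin n) (Fin n) ℂ) (h : M * M * M * M * M = 0) (c : ℂ) :
    exp (c • M) = 1 + c • M + (c ^ 2 / 2) • (M * M) + (c ^ 3 / 6) • (M * M * M)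
      + (c ^ 4 / 24) • (M * M * M * M) := by
  have h5 : M ^ 5 = 0 := by simpa [pow_succ] using h
  simp only [exp_eq_tsum ℂ]
  rw [tsum_eq_sum (s := Finset.range 5) ?_]
  · simp only [Finset.sum_range_succ, Finset.sum_range_zero, smul_pow]
    simp [Nat.factorial, pow_succ, smul_smul]
    module
  · intro i hi
    have hz : M ^ i = 0 := pow_eq_zero_of_le (by simpa using hi) h5
    simp [smul_pow, hz]

private lemma exp_sq_zero (M : Matrix (Fin n) (Fin n) ℂ) (h : M * M = 0) :
    exp M = 1 + M := by
  have h2 : M ^ 2 = 0 := by simpa [pow_succ] using h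
  simp only [exp_eq_tsum ℂ]
  rw [tsum_eq_sum (s := Finset.range 2) ?_]
  · simp [Finset.sum_range_succ]
  · intro i hi
    have hz : M ^ i = 0 := pow_eq_zero_of_le (by simp at hi; omega) h2
    simp [hz]

end Aux

set_option maxHeartbeats 4000000 in
/-- In a setting nilpotent of class 4 (all products of five elements from `{A, B}` vanish),
with `X(a,b) := e^{aλA} e^{bλB} e^{-aλA}` and `Y(a,b) := X(a,b) X(-a,-b)`, the terms linear
in `b` cancel in `Y(a,b)·Y(a,-b)` and
`Y(a,b)·Y(a,-b) = exp(2ab²λ³ [B,[A,B]])`. -/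
theorem compilation_Yab_identity {n : ℕ} (A B : Matrix (Fin n) (Fin n) ℂ) (a b l : ℂ)
    (hnil : ∀ V W X Y Z : Matrix (Fin n) (Fin n) ℂ,
      V ∈ ({A, B} : Set (Matrix (Fin n) (Fin n) ℂ)) →
      W ∈ ({A, B} : Set (Matrix (Fin n) (Fin n) ℂ)) →
      X ∈ ({A, B} : Set (Matrix (Fin n) (Fin n) ℂ)) →
      Y ∈ ({A, B} : Set (Matrix (Fin n) (Fin n) ℂ)) →
      Z ∈ ({A, B} : Set (Matrix (Fin n) (Fin n) ℂ)) → V * W * X * Y * Z = 0) :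
    let X : ℂ → ℂ → Matrix (Fin n) (Fin n) ℂ := fun u v =>
      exp ((u * l) • A) * exp ((v * l) • B) * exp (-((u * l) • A))
    let Y : ℂ → ℂ → Matrix (Fin n) (Fin n) ℂ := fun u v => X u v * X (-u) (-v)
    Y a b * Y a (-b) =
      exp ((2 * a * b ^ 2 * l ^ 3) • (B * (A * B - B * A) - (A * B - B * A) * B)) := by
  intro X Y
  have mA : A ∈ ({A, B} : Set (Matrix (Fin n) (Fin n) ℂ)) := by simp
  have mB : B ∈ ({A, B} : Set (Matrix (Fin n) (Fin n) ℂ)) := by simp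
  have kAAAAA : A * A * A * A * A = 0 := hnil A A A A A mA mA mA mA mA
  have kBAAAA : B * A * A * A * A = 0 := hnil B A A A A mB mA mA mA mA
  have kABAAA : A * B * A * A * A = 0 := hnil A B A A A mA mB mA mA mA
  have kBBAAA : B * B * A * A * A = 0 := hnil B B A A A mB mB mA mA mA
  have kAABAA : A * A * B * A * A = 0 := hnil A A B A A mA mA mB mA mA
  have kBABAA : B * A * B * A * A = 0 := hnil B A B A A mB mA mB mA mA
  have kABBAA : A * B * B * A * A = 0 := hnil A B B A A mA mB mB mA mA
  have kBBBAA : B * B * B * A * A = 0 := hnil B B B A A mB mB mB mA mA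
  have kAAABA : A * A * A * B * A = 0 := hnil A A A B A mA mA mA mB mA
  have kBAABA : B * A * A * B * A = 0 := hnil B A A B A mB mA mA mB mA
  have kABABA : A * B * A * B * A = 0 := hnil A B A B A mA mB mA mB mA
  have kBBABA : B * B * A * B * A = 0 := hnil B B A B A mB mB mA mB mA
  have kAABBA : A * A * B * B * A = 0 := hnil A A B B A mA mA mB mB mA
  have kBABBA : B * A * B * B * A = 0 := hnil B A B B A mB mA mB mB mA
  have kABBBA : A * B * B * B * A = 0 := hnil A B B B A mA mB mB mB mA
  have kBBBBA : B * B * B * B * A = 0 := hnil B B B B A mB mB mB mB mA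
  have kAAAAB : A * A * A * A * B = 0 := hnil A A A A B mA mA mA mA mB
  have kBAAAB : B * A * A * A * B = 0 := hnil B A A A B mB mA mA mA mB
  have kABAAB : A * B * A * A * B = 0 := hnil A B A A B mA mB mA mA mB
  have kBBAAB : B * B * A * A * B = 0 := hnil B B A A B mB mB mA mA mB
  have kAABAB : A * A * B * A * B = 0 := hnil A A B A B mA mA mB mA mB
  have kBABAB : B * A * B * A * B = 0 := hnil B A B A B mB mA mB mA mB
  have kABBAB : A * B * B * A * B = 0 := hnil A B B A B mA mB mB mA mB
  have kBBBAB : B * B * B * A * B = 0 := hnil B B B A B mB mB mB mA mB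
  have kAAABB : A * A * A * B * B = 0 := hnil A A A B B mA mA mA mB mB
  have kBAABB : B * A * A * B * B = 0 := hnil B A A B B mB mA mA mB mB
  have kABABB : A * B * A * B * B = 0 := hnil A B A B B mA mB mA mB mB
  have kBBABB : B * B * A * B * B = 0 := hnil B B A B B mB mB mA mB mB
  have kAABBB : A * A * B * B * B = 0 := hnil A A B B B mA mA mB mB mB
  have kBABBB : B * A * B * B * B = 0 := hnil B A B B B mB mA mB mB mB
  have kABBBB : A * B * B * B * B = 0 := hnil A B B B B mA mB mB mB mB
  have kBBBBB : B * B * B * B * B = 0 := hnil B B B B B mB mB mB mB mB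

  have eA := exp_nilfive A kAAAAA
  have eB := exp_nilfive B kBBBBB
  have hX : ∀ u v : ℂ, X u v =
        (1 : Matrix (Fin n) (Fin n) ℂ) +
        ((1 : ℂ) * v * l) • (B) +
        ((1 : ℂ) * u * v * l ^ 2) • (A * B) +
        ((-1 : ℂ) * u * v * l ^ 2) • (B * A) +
        ((1/2 : ℂ) * v ^ 2 * l ^ 2) • (B * B) +
        ((1/2 : ℂ) * u ^ 2 * v * l ^ 3) • (A * A * B) +
        ((-1 : ℂ) * u ^ 2 * v * l ^ 3) • (A * B * A) +
        ((1/2 : ℂ) * u * v ^ 2 * l ^ 3) • (A * B * B) +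
        ((1/2 : ℂ) * u ^ 2 * v * l ^ 3) • (B * A * A) +
        ((-1/2 : ℂ) * u * v ^ 2 * l ^ 3) • (B * B * A) +
        ((1/6 : ℂ) * v ^ 3 * l ^ 3) • (B * B * B) +
        ((1/6 : ℂ) * u ^ 3 * v * l ^ 4) • (A * A * A * B) +
        ((-1/2 : ℂ) * u ^ 3 * v * l ^ 4) • (A * A * B * A) +
        ((1/4 : ℂ) * u ^ 2 * v ^ 2 * l ^ 4) • (A * A * B * B) +
        ((1/2 : ℂ) * u ^ 3 * v * l ^ 4) • (A * B * A * A) +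
        ((-1/2 : ℂ) * u ^ 2 * v ^ 2 * l ^ 4) • (A * B * B * A) +
        ((1/6 : ℂ) * u * v ^ 3 * l ^ 4) • (A * B * B * B) +
        ((-1/6 : ℂ) * u ^ 3 * v * l ^ 4) • (B * A * A * A) +
        ((1/4 : ℂ) * u ^ 2 * v ^ 2 * l ^ 4) • (B * B * A * A) +
        ((-1/6 : ℂ) * u * v ^ 3 * l ^ 4) • (B * B * B * A) +
        ((1/24 : ℂ) * v ^ 4 * l ^ 4) • (B * B * B * B) := by
    intro u v
    show exp ((u * l) • A) * exp ((v * l) • B) * exp (-((u * l) • A)) = _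
    rw [← neg_smul, eA, eB, eA]
    simp only [mul_add, add_mul, smul_mul_assoc, mul_smul_comm, smul_smul, mul_one, one_mul, ← mul_assoc, kAAAAA, kBAAAA, kABAAA, kBBAAA, kAABAA, kBABAA, kABBAA, kBBBAA, kAAABA, kBAABA, kABABA, kBBABA, kAABBA, kBABBA, kABBBA, kBBBBA, kAAAAB, kBAAAB, kABAAB, kBBAAB, kAABAB, kBABAB, kABBAB, kBBBAB, kAAABB, kBAABB, kABABB, kBBABB, kAABBB, kBABBB, kABBBB, kBBBBB, smul_zero, zero_mul, mul_zero, add_zero, zero_add]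
    module
  have hY : ∀ u v : ℂ, Y u v =
        (1 : Matrix (Fin n) (Fin n) ℂ) +
        ((2 : ℂ) * u * v * l ^ 2) • (A * B) +
        ((-2 : ℂ) * u * v * l ^ 2) • (B * A) +
        ((-1 : ℂ) * u * v ^ 2 * l ^ 3) • (A * B * B) +
        ((2 : ℂ) * u * v ^ 2 * l ^ 3) • (B * A * B) +
        ((-1 : ℂ) * u * v ^ 2 * l ^ 3) • (B * B * A) +
        ((1/3 : ℂ) * u ^ 3 * v * l ^ 4) • (A * A * A * B) +
        ((-1 : ℂ) * u ^ 3 * v * l ^ 4) • (A * A * B * A) +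
        ((1 : ℂ) * u ^ 3 * v * l ^ 4) • (A * B * A * A) +
        ((2 : ℂ) * u ^ 2 * v ^ 2 * l ^ 4) • (A * B * A * B) +
        ((-2 : ℂ) * u ^ 2 * v ^ 2 * l ^ 4) • (A * B * B * A) +
        ((1/3 : ℂ) * u * v ^ 3 * l ^ 4) • (A * B * B * B) +
        ((-1/3 : ℂ) * u ^ 3 * v * l ^ 4) • (B * A * A * A) +
        ((-2 : ℂ) * u ^ 2 * v ^ 2 * l ^ 4) • (B * A * A * B) +
        ((2 : ℂ) * u ^ 2 * v ^ 2 * l ^ 4) • (B * A * B * A) +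
        ((-1 : ℂ) * u * v ^ 3 * l ^ 4) • (B * A * B * B) +
        ((1 : ℂ) * u * v ^ 3 * l ^ 4) • (B * B * A * B) +
        ((-1/3 : ℂ) * u * v ^ 3 * l ^ 4) • (B * B * B * A) := by
    intro u v
    show X u v * X (-u) (-v) = _
    rw [hX, hX]
    simp only [mul_add, add_mul, smul_mul_assoc, mul_smul_comm, smul_smul, mul_one, one_mul, ← mul_assoc, kAAAAA, kBAAAA, kABAAA, kBBAAA, kAABAA, kBABAA, kABBAA, kBBBAA, kAAABA, kBAABA, kABABA, kBBABA, kAABBA, kBABBA, kABBBA, kBBBBA, kAAAAB, kBAAAB, kABAAB, kBBAAB, kAABAB, kBABAB, kABBAB, kBBBAB, kAAABB, kBAABB, kABABB, kBBABB, kAABBB, kBABBB, kABBBB, kBBBBB, smul_zero, zero_mul, mul_zero, add_zero, zero_add]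
    module
  have hD : ((2 * a * b ^ 2 * l ^ 3) • (B * (A * B - B * A) - (A * B - B * A) * B)) *
      ((2 * a * b ^ 2 * l ^ 3) • (B * (A * B - B * A) - (A * B - B * A) * B)) = 0 := by
    simp only [mul_sub, sub_mul, mul_add, add_mul, smul_mul_assoc, mul_smul_comm, smul_smul, mul_one, one_mul, ← mul_assoc, kAAAAA, kBAAAA, kABAAA, kBBAAA, kAABAA, kBABAA, kABBAA, kBBBAA, kAAABA, kBAABA, kABABA, kBBABA, kAABBA, kBABBA, kABBBA, kBBBBA, kAAAAB, kBAAAB, kABAAB, kBBAAB, kAABAB, kBABAB, kABBAB, kBBBAB, kAAABB, kBAABB, kABABB, kBBABB, kAABBB, kBABBB, kABBBB, kBBBBB, smul_zero, zero_mul, mul_zero, add_zero, zero_add]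
    simp
  rw [hY, hY, exp_sq_zero _ hD]
  simp only [mul_sub, sub_mul, mul_add, add_mul, smul_mul_assoc, mul_smul_comm, smul_smul, mul_one, one_mul, ← mul_assoc, kAAAAA, kBAAAA, kABAAA, kBBAAA, kAABAA, kBABAA, kABBAA, kBBBAA, kAAABA, kBAABA, kABABA, kBBABA, kAABBA, kBABBA, kABBBA, kBBBBA, kAAAAB, kBAAAB, kABAAB, kBBAAB, kAABAB, kBABAB, kABBAB, kBBBAB, kAAABB, kBAABB, kABABB, kBBABB, kAABBB, kBABBB, kABBBB, kBBBBB, smul_zero, zero_mul, mul_zero, add_zero, zero_add]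
  module
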